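/- Let $(\Omega, \mathcal{F}, P)$ be a probability space and let $X, Y$ be bounded real random variables, $X$ measurable with respect to a sub-$\sigma$-algebra $\mathcal{A}$ and $Y$ measurable with respect to a sub-$\sigma$-algebra $\mathcal{B}$. Suppose for all $A \in \mathcal{A}$ and $B \in \mathcal{B}$, $|P(A \cap B) - P(A)P(B)| \le \alpha$. Let $U_1, \dots, U_k$ be real random variables with values in $[0, \infty)$ such that for each $2 \le i \le k$: $U_i$ is $\mathcal{B}_i$-measurable, $\sum_{l=1}^{i-1} U_l$ is $\mathcal{A}_i$-measurable, and $|P(A\cap B)-P(A)P(B)| \le \alpha$ for all $A \in \mathcal{A}_i$, $B \in \mathcal{B}_i$, and moreover $U_2, \dots, U_k$ all have the same distribution as $U_1$. Then $\big| E(e^{-\sum_{i=1}^k U_i}) - \big(E(e^{-U_1})\big)^k \big| \le 4(k-1)\alpha$. -/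

import Mathlib

open MeasureTheory

lemma count_bounds (n : ℕ) (hn : 1 ≤ n) (x : ℝ) (hx0 : 0 ≤ x) (hx1 : x ≤ 1) :
    (∑ j ∈ Finset.Icc 1 n, if (j : ℝ) / n ≤ x then (1:ℝ) else 0) / n ≤ x ∧
    x - 1 / n ≤ (∑ j ∈ Finset.Icc 1 n, if (j : ℝ) / n ≤ x then (1:ℝ) else 0) / n := by
  have hn' : (0:ℝ) < n := by exact_mod_cast hn
  set c := ⌊(n:ℝ) * x⌋₊ with hc
  have hcle : (c:ℝ) ≤ n * x := Nat.floor_le (by positivity)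
  have hclt : (n:ℝ) * x < c + 1 := Nat.lt_floor_add_one _
  have hcn : c ≤ n := by
    have h1 : (n:ℝ) * x ≤ (n:ℝ) := by nlinarith
    calc c ≤ ⌊(n:ℝ)⌋₊ := Nat.floor_le_floor h1
    _ = n := Nat.floor_natCast n
  have hsum : (∑ j ∈ Finset.Icc 1 n, if (j : ℝ) / n ≤ x then (1:ℝ) else 0) = c := by
    have key : ∀ j : ℕ, ((j:ℝ) / n ≤ x ↔ j ≤ c) := by
      intro j
      rw [div_le_iff₀ hn', mul_comm x n]
      exact (Nat.le_floor_iff (by positivity)).symm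
    simp only [key]
    rw [Finset.sum_boole]
    have : (Finset.Icc 1 n).filter (fun j => j ≤ c) = Finset.Icc 1 c := by
      ext j; simp only [Finset.mem_filter, Finset.mem_Icc]; omega
    rw [this, Nat.card_Icc]
    simp
  rw [hsum]
  constructor
  · rw [div_le_iff₀ hn']; nlinarith
  · rw [sub_le_iff_le_add, ← add_div, le_div_iff₀ hn']; nlinarith

lemma cov_bound {Ω : Type*} [m0 : MeasurableSpace Ω] (P : Measure Ω) [IsProbabilityMeasure P]
    {α : ℝ} {f g : Ω → ℝ} (hfm : Measurable f) (hgm : Measurable g)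
    (hf0 : ∀ ω, 0 ≤ f ω) (hf1 : ∀ ω, f ω ≤ 1) (hg0 : ∀ ω, 0 ≤ g ω) (hg1 : ∀ ω, g ω ≤ 1)
    (hmix : ∀ c d : ℝ, |(P ({ω | c ≤ f ω} ∩ {ω | d ≤ g ω})).toReal -
        (P {ω | c ≤ f ω}).toReal * (P {ω | d ≤ g ω}).toReal| ≤ α) :
    |(∫ ω, f ω * g ω ∂P) - (∫ ω, f ω ∂P) * (∫ ω, g ω ∂P)| ≤ α := by
  have hI : ∀ (h : Ω → ℝ), Measurable h → (∀ ω, |h ω| ≤ 1) → Integrable h P :=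
    fun h hm hb => (integrable_const (1:ℝ)).mono' hm.aestronglyMeasurable (ae_of_all _ hb)
  have key : ∀ n : ℕ, 1 ≤ n →
      |(∫ ω, f ω * g ω ∂P) - (∫ ω, f ω ∂P) * (∫ ω, g ω ∂P)| ≤ α + 4 / n := by
    intro n hn
    have hn' : (0:ℝ) < n := by exact_mod_cast hn
    set A : ℕ → Set Ω := fun j => {ω | (j:ℝ)/n ≤ f ω} with hA
    set B : ℕ → Set Ω := fun j => {ω | (j:ℝ)/n ≤ g ω} with hB
    have hAm : ∀ j, MeasurableSet (A j) := fun j => measurableSet_le measurable_const hfm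
    have hBm : ∀ j, MeasurableSet (B j) := fun j => measurableSet_le measurable_const hgm
    set F : Ω → ℝ := fun ω => (∑ j ∈ Finset.Icc 1 n, Set.indicator (A j) (fun _ => (1:ℝ)) ω) / n
      with hF
    set G : Ω → ℝ := fun ω => (∑ j ∈ Finset.Icc 1 n, Set.indicator (B j) (fun _ => (1:ℝ)) ω) / n
      with hG
    have hFval : ∀ ω, F ω = (∑ j ∈ Finset.Icc 1 n, if (j:ℝ)/n ≤ f ω then (1:ℝ) else 0) / n := by
      intro ω
      simp only [hF, Set.indicator_apply, hA, Set.mem_setOf_eq]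
    have hGval : ∀ ω, G ω = (∑ j ∈ Finset.Icc 1 n, if (j:ℝ)/n ≤ g ω then (1:ℝ) else 0) / n := by
      intro ω
      simp only [hG, Set.indicator_apply, hB, Set.mem_setOf_eq]
    have hFb : ∀ ω, F ω ≤ f ω ∧ f ω - 1/n ≤ F ω := by
      intro ω; rw [hFval ω]; exact count_bounds n hn (f ω) (hf0 ω) (hf1 ω)
    have hGb : ∀ ω, G ω ≤ g ω ∧ g ω - 1/n ≤ G ω := by
      intro ω; rw [hGval ω]; exact count_bounds n hn (g ω) (hg0 ω) (hg1 ω)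
    have hF0 : ∀ ω, 0 ≤ F ω := by
      intro ω
      apply div_nonneg _ hn'.le
      exact Finset.sum_nonneg fun j _ => Set.indicator_nonneg (fun _ _ => zero_le_one) ω
    have hG0 : ∀ ω, 0 ≤ G ω := by
      intro ω
      apply div_nonneg _ hn'.le
      exact Finset.sum_nonneg fun j _ => Set.indicator_nonneg (fun _ _ => zero_le_one) ω
    have hFmeas : Measurable F :=
      (Finset.measurable_sum _ fun j _ => (measurable_const.indicator (hAm j))).div_const _
    have hGmeas : Measurable G :=
      (Finset.measurable_sum _ fun j _ => (measurable_const.indicator (hBm j))).div_const _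
    -- integral computations
    have hInd : ∀ (s : Set Ω), MeasurableSet s →
        ∫ ω, Set.indicator s (fun _ => (1:ℝ)) ω ∂P = (P s).toReal := by
      intro s hs
      rw [integral_indicator_const (1:ℝ) hs, smul_eq_mul, mul_one, measureReal_def]
    have hIntF : ∫ ω, F ω ∂P = (∑ j ∈ Finset.Icc 1 n, (P (A j)).toReal) / n := by
      simp only [hF]
      rw [integral_div, integral_finset_sum _ fun j _ =>
        (integrable_const (1:ℝ)).indicator (hAm j)]
      congr 1
      exact Finset.sum_congr rfl fun j _ => hInd _ (hAm j)
    have hIntG : ∫ ω, G ω ∂P = (∑ j ∈ Finset.Icc 1 n, (P (B j)).toReal) / n := by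
      simp only [hG]
      rw [integral_div, integral_finset_sum _ fun j _ =>
        (integrable_const (1:ℝ)).indicator (hBm j)]
      congr 1
      exact Finset.sum_congr rfl fun j _ => hInd _ (hBm j)
    have hprod : ∀ ω, F ω * G ω = (∑ j ∈ Finset.Icc 1 n, ∑ j' ∈ Finset.Icc 1 n,
        Set.indicator (A j ∩ B j') (fun _ => (1:ℝ)) ω) / ((n:ℝ) * n) := by
      intro ω
      simp only [hF, hG]
      rw [div_mul_div_comm, Finset.sum_mul_sum]
      congr 1
      refine Finset.sum_congr rfl fun j _ => Finset.sum_congr rfl fun j' _ => ?_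
      by_cases h1 : ω ∈ A j <;> by_cases h2 : ω ∈ B j' <;>
        simp [Set.indicator_apply, h1, h2, Set.mem_inter_iff]
    have hIntFG : ∫ ω, F ω * G ω ∂P = (∑ j ∈ Finset.Icc 1 n, ∑ j' ∈ Finset.Icc 1 n,
        (P (A j ∩ B j')).toReal) / ((n:ℝ) * n) := by
      rw [integral_congr_ae (ae_of_all _ hprod)]
      rw [integral_div, integral_finset_sum _ fun j _ => integrable_finset_sum _
        fun j' _ => (integrable_const (1:ℝ)).indicator ((hAm j).inter (hBm j'))]
      congr 1
      refine Finset.sum_congr rfl fun j _ => ?_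
      rw [integral_finset_sum _ fun j' _ =>
        (integrable_const (1:ℝ)).indicator ((hAm j).inter (hBm j'))]
      exact Finset.sum_congr rfl fun j' _ => hInd _ ((hAm j).inter (hBm j'))
    -- the mixing bound on the discretized variables
    have hmid : |(∫ ω, F ω * G ω ∂P) - (∫ ω, F ω ∂P) * (∫ ω, G ω ∂P)| ≤ α := by
      rw [hIntFG, hIntF, hIntG, div_mul_div_comm, Finset.sum_mul_sum, div_sub_div_same]
      rw [abs_div, abs_of_pos (by positivity : (0:ℝ) < (n:ℝ) * n), div_le_iff₀ (by positivity)]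
      rw [← Finset.sum_sub_distrib]
      calc |∑ j ∈ Finset.Icc 1 n, (∑ j' ∈ Finset.Icc 1 n, (P (A j ∩ B j')).toReal
              - ∑ j' ∈ Finset.Icc 1 n, (P (A j)).toReal * (P (B j')).toReal)|
          ≤ ∑ j ∈ Finset.Icc 1 n, |∑ j' ∈ Finset.Icc 1 n, (P (A j ∩ B j')).toReal
              - ∑ j' ∈ Finset.Icc 1 n, (P (A j)).toReal * (P (B j')).toReal| :=
            Finset.abs_sum_le_sum_abs _ _
        _ ≤ ∑ j ∈ Finset.Icc 1 n, (n : ℝ) * α := by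
            refine Finset.sum_le_sum fun j _ => ?_
            rw [← Finset.sum_sub_distrib]
            calc |∑ j' ∈ Finset.Icc 1 n, ((P (A j ∩ B j')).toReal
                    - (P (A j)).toReal * (P (B j')).toReal)|
                ≤ ∑ j' ∈ Finset.Icc 1 n, |(P (A j ∩ B j')).toReal
                    - (P (A j)).toReal * (P (B j')).toReal| := Finset.abs_sum_le_sum_abs _ _
              _ ≤ ∑ j' ∈ Finset.Icc 1 n, α :=
                  Finset.sum_le_sum fun j' _ => hmix ((j:ℝ)/n) ((j':ℝ)/n)
              _ = (n:ℝ) * α := by rw [Finset.sum_const, Nat.card_Icc]; simp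
        _ = α * ((n:ℝ) * n) := by rw [Finset.sum_const, Nat.card_Icc]; simp; ring
    -- approximation errors
    have habs1 : ∀ ω, |f ω * g ω - F ω * G ω| ≤ 2 / n := by
      intro ω
      obtain ⟨hF1, hF2⟩ := hFb ω
      obtain ⟨hG1, hG2⟩ := hGb ω
      have e : f ω * g ω - F ω * G ω = (f ω - F ω) * g ω + F ω * (g ω - G ω) := by ring
      rw [e]
      calc |(f ω - F ω) * g ω + F ω * (g ω - G ω)|
          ≤ |(f ω - F ω) * g ω| + |F ω * (g ω - G ω)| := abs_add_le _ _
        _ = |f ω - F ω| * |g ω| + |F ω| * |g ω - G ω| := by rw [abs_mul, abs_mul]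
        _ ≤ (1/n) * 1 + 1 * (1/n) := add_le_add
            (mul_le_mul (by rw [abs_le]; constructor <;> linarith)
              (by rw [abs_le]; exact ⟨by linarith [hg0 ω], hg1 ω⟩) (abs_nonneg _) (by positivity))
            (mul_le_mul (by rw [abs_le]; exact ⟨by linarith [hF0 ω], hF1.trans (hf1 ω)⟩)
              (by rw [abs_le]; constructor <;> linarith) (abs_nonneg _) zero_le_one)
        _ = 2 / n := by ring
    have hb01 : ∀ x y : ℝ, 0 ≤ x → x ≤ 1 → 0 ≤ y → y ≤ 1 → |x * y| ≤ 1 := by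
      intro x y h1 h2 h3 h4
      rw [abs_of_nonneg (mul_nonneg h1 h3)]
      nlinarith
    have hfgInt : Integrable (fun ω => f ω * g ω) P :=
      hI _ (hfm.mul hgm) fun ω => hb01 _ _ (hf0 ω) (hf1 ω) (hg0 ω) (hg1 ω)
    have hFGInt : Integrable (fun ω => F ω * G ω) P :=
      hI _ (hFmeas.mul hGmeas) fun ω =>
        hb01 _ _ (hF0 ω) ((hFb ω).1.trans (hf1 ω)) (hG0 ω) ((hGb ω).1.trans (hg1 ω))
    have hfInt : Integrable f P := hI _ hfm fun ω => by
      rw [abs_le]; exact ⟨by linarith [hf0 ω], hf1 ω⟩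
    have hgInt : Integrable g P := hI _ hgm fun ω => by
      rw [abs_le]; exact ⟨by linarith [hg0 ω], hg1 ω⟩
    have hFInt : Integrable F P := hI _ hFmeas fun ω => by
      rw [abs_le]; exact ⟨by linarith [hF0 ω], le_trans (hFb ω).1 (hf1 ω)⟩
    have hGInt : Integrable G P := hI _ hGmeas fun ω => by
      rw [abs_le]; exact ⟨by linarith [hG0 ω], le_trans (hGb ω).1 (hg1 ω)⟩
    have habs_int : ∀ (u v : Ω → ℝ), Integrable u P → Integrable v P → ∀ (C : ℝ),
        (∀ ω, |u ω - v ω| ≤ C) → |∫ ω, u ω ∂P - ∫ ω, v ω ∂P| ≤ C := by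
      intro u v hu hv C hb
      rw [← integral_sub hu hv]
      calc |∫ ω, (u ω - v ω) ∂P| = ‖∫ ω, (u ω - v ω) ∂P‖ := (Real.norm_eq_abs _).symm
        _ ≤ C * (P Set.univ).toReal := norm_integral_le_of_norm_le_const
            (ae_of_all _ fun ω => by rw [Real.norm_eq_abs]; exact hb ω)
        _ = C := by simp
    have e1 : |∫ ω, f ω * g ω ∂P - ∫ ω, F ω * G ω ∂P| ≤ 2 / n :=
      habs_int _ _ hfgInt hFGInt _ habs1
    have e2 : |∫ ω, f ω ∂P - ∫ ω, F ω ∂P| ≤ 1 / n :=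
      habs_int _ _ hfInt hFInt _ fun ω => by
        obtain ⟨h1, h2⟩ := hFb ω; rw [abs_le]; constructor <;> linarith
    have e3 : |∫ ω, g ω ∂P - ∫ ω, G ω ∂P| ≤ 1 / n :=
      habs_int _ _ hgInt hGInt _ fun ω => by
        obtain ⟨h1, h2⟩ := hGb ω; rw [abs_le]; constructor <;> linarith
    have bf : |∫ ω, f ω ∂P| ≤ 1 := by
      calc |∫ ω, f ω ∂P| = ‖∫ ω, f ω ∂P‖ := (Real.norm_eq_abs _).symm
        _ ≤ 1 * (P Set.univ).toReal := norm_integral_le_of_norm_le_const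
            (ae_of_all _ fun ω => by
              rw [Real.norm_eq_abs, abs_le]; exact ⟨by linarith [hf0 ω], hf1 ω⟩)
        _ = 1 := by simp
    have bG : |∫ ω, G ω ∂P| ≤ 1 := by
      calc |∫ ω, G ω ∂P| = ‖∫ ω, G ω ∂P‖ := (Real.norm_eq_abs _).symm
        _ ≤ 1 * (P Set.univ).toReal := norm_integral_le_of_norm_le_const
            (ae_of_all _ fun ω => by
              rw [Real.norm_eq_abs, abs_le]
              exact ⟨by linarith [hG0 ω], le_trans (hGb ω).1 (hg1 ω)⟩)
        _ = 1 := by simp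
    have e4 : |(∫ ω, f ω ∂P) * (∫ ω, g ω ∂P) - (∫ ω, F ω ∂P) * (∫ ω, G ω ∂P)| ≤ 2 / n := by
      have e : (∫ ω, f ω ∂P) * (∫ ω, g ω ∂P) - (∫ ω, F ω ∂P) * (∫ ω, G ω ∂P)
          = (∫ ω, f ω ∂P - ∫ ω, F ω ∂P) * (∫ ω, G ω ∂P)
            + (∫ ω, f ω ∂P) * (∫ ω, g ω ∂P - ∫ ω, G ω ∂P) := by ring
      rw [e]
      calc _ ≤ |(∫ ω, f ω ∂P - ∫ ω, F ω ∂P) * (∫ ω, G ω ∂P)|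
              + |(∫ ω, f ω ∂P) * (∫ ω, g ω ∂P - ∫ ω, G ω ∂P)| := abs_add_le _ _
        _ = |∫ ω, f ω ∂P - ∫ ω, F ω ∂P| * |∫ ω, G ω ∂P|
              + |∫ ω, f ω ∂P| * |∫ ω, g ω ∂P - ∫ ω, G ω ∂P| := by rw [abs_mul, abs_mul]
        _ ≤ (1/n) * 1 + 1 * (1/n) := add_le_add
            (mul_le_mul e2 bG (abs_nonneg _) (by positivity))
            (mul_le_mul bf e3 (abs_nonneg _) zero_le_one)
        _ = 2 / n := by ring
    calc |(∫ ω, f ω * g ω ∂P) - (∫ ω, f ω ∂P) * (∫ ω, g ω ∂P)|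
        ≤ |∫ ω, f ω * g ω ∂P - ∫ ω, F ω * G ω ∂P|
          + |(∫ ω, F ω * G ω ∂P) - (∫ ω, F ω ∂P) * (∫ ω, G ω ∂P)|
          + |(∫ ω, F ω ∂P) * (∫ ω, G ω ∂P) - (∫ ω, f ω ∂P) * (∫ ω, g ω ∂P)| := by
          have h1 := abs_sub_le (∫ ω, f ω * g ω ∂P) ((∫ ω, F ω ∂P) * (∫ ω, G ω ∂P))
            ((∫ ω, f ω ∂P) * (∫ ω, g ω ∂P))
          have h2 := abs_sub_le (∫ ω, f ω * g ω ∂P) (∫ ω, F ω * G ω ∂P)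
            ((∫ ω, F ω ∂P) * (∫ ω, G ω ∂P))
          linarith
      _ ≤ 2/n + α + 2/n := by
          have e4' : |(∫ ω, F ω ∂P) * (∫ ω, G ω ∂P) - (∫ ω, f ω ∂P) * (∫ ω, g ω ∂P)| ≤ 2/n := by
            rw [abs_sub_comm]; exact e4
          linarith [e1, hmid, e4']
      _ = α + 4/n := by ring
  refine le_of_forall_pos_le_add fun ε hε => ?_
  obtain ⟨n, hn⟩ := exists_nat_gt (max 1 (4/ε))
  have hn1 : 1 ≤ n := by
    have h1 : (1:ℝ) ≤ max 1 (4/ε) := le_max_left _ _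
    exact_mod_cast h1.trans hn.le
  have hn4 : 4 / (n:ℝ) < ε := by
    have h1 : 4/ε < n := lt_of_le_of_lt (le_max_right _ _) hn
    have hn0 : (0:ℝ) < n := by positivity
    rw [div_lt_iff₀ hn0]
    rw [div_lt_iff₀ hε] at h1
    linarith
  linarith [key n hn1]


theorem stmt5 {Ω : Type*} [m0 : MeasurableSpace Ω]
    (P : Measure Ω) [IsProbabilityMeasure P]
    (α : ℝ) (hα : 0 ≤ α)
    -- a pair of bounded random variables measurable w.r.t. sub-σ-algebras 𝒜, ℬ
    -- whose mixing coefficient is at most α, as in the covariance inequality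
    (𝒜 ℬ : MeasurableSpace Ω) (h𝒜 : 𝒜 ≤ m0) (hℬ : ℬ ≤ m0)
    (X Y : Ω → ℝ) (hX : Measurable[𝒜] X) (hY : Measurable[ℬ] Y)
    (hXb : ∃ C, ∀ ω, |X ω| ≤ C) (hYb : ∃ C, ∀ ω, |Y ω| ≤ C)
    (hmix : ∀ A B : Set Ω, MeasurableSet[𝒜] A → MeasurableSet[ℬ] B →
      |(P (A ∩ B)).toReal - (P A).toReal * (P B).toReal| ≤ α)
    -- the random variables U₁, ..., U_k and the σ-algebras 𝒜ᵢ, ℬᵢ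
    (k : ℕ) (hk : 1 ≤ k)
    (U : ℕ → Ω → ℝ) (hUmeas : ∀ i, Measurable[m0] (U i))
    (hUpos : ∀ i ω, 0 ≤ U i ω)
    (𝒜' ℬ' : ℕ → MeasurableSpace Ω)
    (h𝒜' : ∀ i, 𝒜' i ≤ m0) (hℬ' : ∀ i, ℬ' i ≤ m0)
    (hUB : ∀ i, 2 ≤ i → i ≤ k → Measurable[ℬ' i] (U i))
    (hUA : ∀ i, 2 ≤ i → i ≤ k →
      Measurable[𝒜' i] (fun ω => ∑ l ∈ Finset.Icc 1 (i - 1), U l ω))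
    (hmix' : ∀ i, 2 ≤ i → i ≤ k → ∀ A B : Set Ω,
      MeasurableSet[𝒜' i] A → MeasurableSet[ℬ' i] B →
      |(P (A ∩ B)).toReal - (P A).toReal * (P B).toReal| ≤ α)
    (hid : ∀ i, 2 ≤ i → i ≤ k → @Measure.map Ω ℝ m0 _ (U i) P = @Measure.map Ω ℝ m0 _ (U 1) P) :
    |(∫ ω, Real.exp (-∑ i ∈ Finset.Icc 1 k, U i ω) ∂P)
        - (∫ ω, Real.exp (-U 1 ω) ∂P) ^ k| ≤ 4 * (k - 1 : ℝ) * α := by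
  set m := ∫ ω, Real.exp (-U 1 ω) ∂P with hm
  have hm0 : 0 ≤ m := integral_nonneg fun ω => (Real.exp_pos _).le
  have hexp01 : ∀ x : ℝ, 0 ≤ x → Real.exp (-x) ≤ 1 := by
    intro x hx
    rw [Real.exp_le_one_iff]
    linarith
  have hUInt : ∀ (h : Ω → ℝ), Measurable[m0] h → (∀ ω, 0 ≤ h ω) →
      Integrable (fun ω => Real.exp (-h ω)) P := by
    intro h hmeas hpos
    refine (integrable_const (1:ℝ)).mono'
      (Real.measurable_exp.comp hmeas.neg).aestronglyMeasurable (ae_of_all _ fun ω => ?_)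
    rw [Real.norm_eq_abs, abs_of_pos (Real.exp_pos _)]
    exact hexp01 _ (hpos ω)
  have hm1 : m ≤ 1 := by
    rw [hm]
    calc (∫ ω, Real.exp (-U 1 ω) ∂P) ≤ ∫ _, (1:ℝ) ∂P :=
        integral_mono (hUInt (U 1) (hUmeas 1) (hUpos 1)) (integrable_const 1)
          fun ω => hexp01 _ (hUpos 1 ω)
      _ = 1 := by simp
  have main : ∀ j, 1 ≤ j → j ≤ k →
      |(∫ ω, Real.exp (-∑ i ∈ Finset.Icc 1 j, U i ω) ∂P) - m ^ j| ≤ ((j:ℝ) - 1) * α := by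
    intro j hj
    induction j, hj using Nat.le_induction with
    | base =>
      intro _
      simp [Finset.Icc_self, hm]
    | succ j hj1 ih =>
      intro hjk
      have hjk' : j ≤ k := le_trans (Nat.le_succ j) hjk
      have h2j : 2 ≤ j + 1 := by omega
      -- split off the last term
      have hsplit : ∀ ω, Real.exp (-∑ i ∈ Finset.Icc 1 (j+1), U i ω)
          = Real.exp (-∑ i ∈ Finset.Icc 1 j, U i ω) * Real.exp (-U (j+1) ω) := by
        intro ω
        rw [Finset.sum_Icc_succ_top (by omega : 1 ≤ j + 1), neg_add, Real.exp_add]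
      set f : Ω → ℝ := fun ω => Real.exp (-∑ i ∈ Finset.Icc 1 j, U i ω) with hf
      set g : Ω → ℝ := fun ω => Real.exp (-U (j+1) ω) with hg
      have hSmeas : Measurable[m0] (fun ω => ∑ i ∈ Finset.Icc 1 j, U i ω) :=
        Finset.measurable_sum _ fun i _ => hUmeas i
      have hfm : Measurable[m0] f := Real.measurable_exp.comp hSmeas.neg
      have hgm : Measurable[m0] g := Real.measurable_exp.comp (hUmeas (j+1)).neg
      have hf0 : ∀ ω, 0 ≤ f ω := fun ω => (Real.exp_pos _).le
      have hg0 : ∀ ω, 0 ≤ g ω := fun ω => (Real.exp_pos _).le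
      have hf1 : ∀ ω, f ω ≤ 1 := fun ω =>
        hexp01 _ (Finset.sum_nonneg fun i _ => hUpos i ω)
      have hg1 : ∀ ω, g ω ≤ 1 := fun ω => hexp01 _ (hUpos (j+1) ω)
      -- measurability w.r.t. the sub-σ-algebras
      have hfA : Measurable[𝒜' (j+1)] f := by
        have h := hUA (j+1) h2j hjk
        simp only [Nat.add_sub_cancel] at h
        exact Real.measurable_exp.comp (Measurable.neg h)
      have hgB : Measurable[ℬ' (j+1)] g :=
        Real.measurable_exp.comp (Measurable.neg (hUB (j+1) h2j hjk))
      -- the covariance bound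
      have hcov : |(∫ ω, f ω * g ω ∂P) - (∫ ω, f ω ∂P) * (∫ ω, g ω ∂P)| ≤ α := by
        refine cov_bound (m0 := m0) P hfm hgm hf0 hf1 hg0 hg1 fun c d => ?_
        refine hmix' (j+1) h2j hjk _ _ ?_ ?_
        · exact measurableSet_le measurable_const hfA
        · exact measurableSet_le measurable_const hgB
      -- identify ∫ g with m
      have hgeq : (∫ ω, g ω ∂P) = m := by
        have h1 := integral_map (μ := P) (hUmeas (j+1)).aemeasurable
          (f := fun x => Real.exp (-x))
          (Real.measurable_exp.comp measurable_neg).aestronglyMeasurable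
        rw [hid (j+1) h2j hjk] at h1
        have h2 := integral_map (μ := P) (hUmeas 1).aemeasurable
          (f := fun x => Real.exp (-x))
          (Real.measurable_exp.comp measurable_neg).aestronglyMeasurable
        rw [hm]
        calc (∫ ω, g ω ∂P) = ∫ ω, Real.exp (-U (j+1) ω) ∂P := rfl
          _ = ∫ x, Real.exp (-x) ∂(@Measure.map Ω ℝ m0 _ (U 1) P) := h1.symm
          _ = ∫ ω, Real.exp (-U 1 ω) ∂P := h2
      have hIfg : ∫ ω, Real.exp (-∑ i ∈ Finset.Icc 1 (j+1), U i ω) ∂P = ∫ ω, f ω * g ω ∂P :=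
        integral_congr_ae (ae_of_all _ hsplit)
      have hIf1 : |(∫ ω, f ω ∂P) - m ^ j| ≤ ((j:ℝ) - 1) * α := ih hjk'
      have hIfb : |∫ ω, f ω ∂P| ≤ 1 := by
        calc |∫ ω, f ω ∂P| = ‖∫ ω, f ω ∂P‖ := (Real.norm_eq_abs _).symm
          _ ≤ 1 * (P Set.univ).toReal := norm_integral_le_of_norm_le_const
              (ae_of_all _ fun ω => by
                rw [Real.norm_eq_abs, abs_of_nonneg (hf0 ω)]; exact hf1 ω)
          _ = 1 := by simp
      rw [hIfg]
      have step : |(∫ ω, f ω * g ω ∂P) - m ^ (j+1)| ≤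
          |(∫ ω, f ω * g ω ∂P) - (∫ ω, f ω ∂P) * m| + |(∫ ω, f ω ∂P) * m - m ^ (j+1)| :=
        abs_sub_le _ _ _
      have step1 : |(∫ ω, f ω * g ω ∂P) - (∫ ω, f ω ∂P) * m| ≤ α := by
        rw [← hgeq]; exact hcov
      have step2 : |(∫ ω, f ω ∂P) * m - m ^ (j+1)| ≤ ((j:ℝ) - 1) * α := by
        have : (∫ ω, f ω ∂P) * m - m ^ (j+1) = ((∫ ω, f ω ∂P) - m ^ j) * m := by ring
        rw [this, abs_mul, abs_of_nonneg hm0]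
        have hj1' : (1:ℝ) ≤ (j:ℝ) := by exact_mod_cast hj1
        calc |(∫ ω, f ω ∂P) - m ^ j| * m ≤ (((j:ℝ) - 1) * α) * 1 :=
            mul_le_mul hIf1 hm1 hm0 (mul_nonneg (by linarith) hα)
          _ = ((j:ℝ) - 1) * α := mul_one _
      have hcast : ((j + 1 : ℕ) : ℝ) - 1 = ((j:ℝ) - 1) + 1 := by push_cast; ring
      rw [hcast]
      have hre : (((j:ℝ) - 1) + 1) * α = α + ((j:ℝ) - 1) * α := by ring
      rw [hre]
      linarith [step, step1, step2]
  have hfinal := main k hk le_rfl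
  have hk1 : (1:ℝ) ≤ (k:ℝ) := by exact_mod_cast hk
  have h1 : ((k:ℝ) - 1) * α ≤ 4 * ((k:ℝ) - 1) * α := by nlinarith
  calc |(∫ ω, Real.exp (-∑ i ∈ Finset.Icc 1 k, U i ω) ∂P) - m ^ k| ≤ ((k:ℝ) - 1) * α := hfinal
    _ ≤ 4 * ((k:ℝ) - 1) * α := h1
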